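/- Let f : ℝⁿ → ℝ be convex and differentiable with minimizer X⋆, let r > 3, and let X be a twice differentiable solution of 0 = Ẍ + (r/t)Ẋ + ∇f(X) on (0,∞) with X(t) → X₀, Ẋ(t) → 0 as t → 0⁺. Then for all t > 0, f(X(t)) − f⋆ ≤ (r − 1)‖X₀ − X⋆‖²/t². -/

import Mathlib

open Filter MeasureTheory
open scoped RealInnerProductSpace Topology

theorem agm_ode_rate_r_gt3
    {E : Type*} [NormedAddCommGroup E] [InnerProductSpace ℝ E] [CompleteSpace E]
    (f : E → ℝ) (g : E → E)
    (hgrad : ∀ x, HasGradientAt f (g x) x)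
    (hconv : ∀ x y, 0 ≤ f x - f y - ⟪g y, x - y⟫)
    (r : ℝ) (hr : 3 < r)
    (X X' X'' : ℝ → E)
    (hX' : ∀ t ∈ Set.Ioi (0:ℝ), HasDerivAt X (X' t) t)
    (hX'' : ∀ t ∈ Set.Ioi (0:ℝ), HasDerivAt X' (X'' t) t)
    (hODE : ∀ t ∈ Set.Ioi (0:ℝ), X'' t + (r / t) • X' t + g (X t) = 0)
    (X₀ : E) (hX0 : Tendsto X (𝓝[>] (0:ℝ)) (𝓝 X₀))
    (hXd0 : Tendsto X' (𝓝[>] (0:ℝ)) (𝓝 0))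
    (Xs : E) (hmin : ∀ x, f Xs ≤ f x) :
    ∀ t > (0:ℝ), f (X t) - f Xs ≤ (r - 1) * ‖X₀ - Xs‖ ^ 2 / t ^ 2 := by
  -- Lyapunov function
  set W : ℝ → E := fun t => (2:ℝ) • (X t - Xs) + t • X' t with hWdef
  set En : ℝ → ℝ := fun t =>
    2 * t ^ 2 * (f (X t) - f Xs) + ⟪W t, W t⟫ + 2 * (r - 3) * ⟪X t - Xs, X t - Xs⟫ with hEdef
  -- derivative of the Lyapunov function
  set En' : ℝ → ℝ := fun t =>
    (2 * t ^ 2 * ⟪g (X t), X' t⟫ + (2 * (2 * t)) * (f (X t) - f Xs))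
      + (⟪W t, (2:ℝ) • X' t + (t • X'' t + (1:ℝ) • X' t)⟫
          + ⟪(2:ℝ) • X' t + (t • X'' t + (1:ℝ) • X' t), W t⟫)
      + 2 * (r - 3) * (⟪X t - Xs, X' t⟫ + ⟪X' t, X t - Xs⟫) with hE'def
  have hE : ∀ t ∈ Set.Ioi (0:ℝ), HasDerivAt En (En' t) t := by
    intro t ht
    have hXt := hX' t ht
    have hY : HasDerivAt (fun s => X s - Xs) (X' t) t := hXt.sub_const Xs
    have hfX : HasDerivAt (fun s => f (X s)) ⟪g (X t), X' t⟫ t := by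
      have h := (hgrad (X t)).hasFDerivAt.comp_hasDerivAt t hXt
      simp at h
      exact h
    have hWd : HasDerivAt W ((2:ℝ) • X' t + (t • X'' t + (1:ℝ) • X' t)) t :=
      (hY.const_smul (2:ℝ)).add ((hasDerivAt_id t).smul (hX'' t ht))
    have h1 : HasDerivAt (fun s => 2 * s ^ 2 * (f (X s) - f Xs))
        (2 * t ^ 2 * ⟪g (X t), X' t⟫ + (2 * (2 * t)) * (f (X t) - f Xs)) t := by
      have h := (((hasDerivAt_pow 2 t).const_mul 2)).mul (hfX.sub_const (f Xs))
      refine h.congr_deriv ?_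
      push_cast
      norm_num
      try ring
    have h2 := (HasDerivAt.inner ℝ hWd hWd : HasDerivAt (fun s => ⟪W s, W s⟫) _ t)
    have h3 := (HasDerivAt.inner ℝ hY hY).const_mul (2 * (r - 3))
    have := (h1.add h2).add h3
    refine this.congr_deriv ?_
    try ring
  -- the derivative is nonpositive
  have hE'le : ∀ t ∈ Set.Ioi (0:ℝ), En' t ≤ 0 := by
    intro t ht
    have ht0 : (0:ℝ) < t := ht
    have hne : t ≠ 0 := ne_of_gt ht0
    have hode := hODE t ht
    have hXdd : X'' t = -((r / t) • X' t) - g (X t) := by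
      linear_combination (norm := module) hode
    have hV : (2:ℝ) • X' t + (t • X'' t + (1:ℝ) • X' t)
        = (3 - r) • X' t + (-t) • g (X t) := by
      rw [hXdd]
      have h1 : t • ((r / t) • X' t) = r • X' t := by
        rw [smul_smul, mul_div_cancel₀ _ hne]
      rw [smul_sub, smul_neg, h1]
      module
    have hB : f (X t) - f Xs ≤ ⟪g (X t), X t - Xs⟫ := by
      have h := hconv Xs (X t)
      have h2 : ⟪g (X t), Xs - X t⟫ = -⟪g (X t), X t - Xs⟫ := by
        rw [← inner_neg_right, neg_sub]
      linarith
    have hF : 0 ≤ f (X t) - f Xs := sub_nonneg.2 (hmin _)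
    have hC : 0 ≤ ⟪X' t, X' t⟫ := real_inner_self_nonneg
    have hcomm1 : ⟪X' t, g (X t)⟫ = ⟪g (X t), X' t⟫ := real_inner_comm _ _
    have hcomm2 : ⟪X t - Xs, g (X t)⟫ = ⟪g (X t), X t - Xs⟫ := real_inner_comm _ _
    have hcomm3 : ⟪X' t, X t - Xs⟫ = ⟪X t - Xs, X' t⟫ := real_inner_comm _ _
    simp only [hE'def, hWdef]
    rw [hV]
    simp only [inner_add_left, inner_add_right, real_inner_smul_left, real_inner_smul_right]
    nlinarith [mul_nonneg (le_of_lt ht0) hF, mul_nonneg (le_of_lt ht0) hC,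
      mul_nonneg (le_of_lt ht0) (sub_nonneg.2 hB), hr]
  -- E is antitone on (0, ∞)
  have hanti : AntitoneOn En (Set.Ioi 0) := by
    apply antitoneOn_of_deriv_nonpos (convex_Ioi 0)
      (fun t ht => (hE t ht).continuousAt.continuousWithinAt)
    · intro x hx
      rw [interior_Ioi] at hx
      exact (hE x hx).differentiableAt.differentiableWithinAt
    · intro x hx
      rw [interior_Ioi] at hx
      rw [(hE x hx).deriv]
      exact hE'le x hx
  -- the limit of E at 0⁺
  set L : ℝ := 2 * (0:ℝ) ^ 2 * (f X₀ - f Xs) + ⟪(2:ℝ) • (X₀ - Xs), (2:ℝ) • (X₀ - Xs)⟫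
      + 2 * (r - 3) * ⟪X₀ - Xs, X₀ - Xs⟫ with hLdef
  have hid : Tendsto (fun s : ℝ => s) (𝓝[>] 0) (𝓝 0) := tendsto_id.mono_right nhdsWithin_le_nhds
  have hXsub : Tendsto (fun s => X s - Xs) (𝓝[>] (0:ℝ)) (𝓝 (X₀ - Xs)) :=
    hX0.sub tendsto_const_nhds
  have hsmul : Tendsto (fun s => s • X' s) (𝓝[>] (0:ℝ)) (𝓝 ((0:ℝ) • (0:E))) := hid.smul hXd0
  have hW0 : Tendsto W (𝓝[>] (0:ℝ)) (𝓝 ((2:ℝ) • (X₀ - Xs))) := by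
    have := (hXsub.const_smul (2:ℝ)).add hsmul
    simpa [hWdef] using this
  have hf0 : Tendsto (fun s => f (X s)) (𝓝[>] (0:ℝ)) (𝓝 (f X₀)) :=
    ((hgrad X₀).hasFDerivAt.continuousAt.tendsto).comp hX0
  have hEn0 : Tendsto En (𝓝[>] (0:ℝ)) (𝓝 L) := by
    rw [hLdef]
    exact (((((hid.pow 2).const_mul 2).mul (hf0.sub_const (f Xs)))).add
        ((Filter.Tendsto.inner hW0 hW0))).add
      ((Filter.Tendsto.inner hXsub hXsub).const_mul (2 * (r - 3)))
  have hLval : L = 2 * (r - 1) * ‖X₀ - Xs‖ ^ 2 := by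
    rw [hLdef, real_inner_smul_left, real_inner_smul_right, real_inner_self_eq_norm_sq]
    ring
  -- conclude
  intro t ht0
  have htI : t ∈ Set.Ioi (0:ℝ) := ht0
  have hkey : En t ≤ L := by
    apply ge_of_tendsto hEn0
    filter_upwards [Ioo_mem_nhdsGT_of_mem (Set.left_mem_Ico.2 ht0)] with s hs
    exact hanti hs.1 htI hs.2.le
  have hWpos : 0 ≤ ⟪W t, W t⟫ := real_inner_self_nonneg
  have hYpos : 0 ≤ ⟪X t - Xs, X t - Xs⟫ := real_inner_self_nonneg
  have h1 : 2 * t ^ 2 * (f (X t) - f Xs) ≤ L := by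
    have h2 : 0 ≤ 2 * (r - 3) * ⟪X t - Xs, X t - Xs⟫ :=
      mul_nonneg (by linarith) hYpos
    have h3 : En t = 2 * t ^ 2 * (f (X t) - f Xs) + ⟪W t, W t⟫
        + 2 * (r - 3) * ⟪X t - Xs, X t - Xs⟫ := rfl
    linarith [hkey, h3 ▸ hkey]
  rw [le_div_iff₀ (by positivity : (0:ℝ) < t ^ 2)]
  rw [hLval] at h1
  nlinarith [h1]
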